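/- Fix n ≥ 1 and consider Q_n with the vertices 0 := (0,…,0) and 1 := (1,…,1). Let (ξ_e) be mutually independent rate-1 exponential random variables indexed by the edges of Q_n, and let m_n denote the minimum of X_π over all self-avoiding paths π from 0 to 1 in Q_n. Then for every real x > 0, P(m_n ≤ x) ≤ (1 + x) · sinh(x)^n. -/

import Mathlib

open SimpleGraph MeasureTheory ProbabilityTheory Real

/-- The `n`-dimensional hypercube graph: vertices are `{0,1}^n`, two vertices being adjacent
iff they differ in exactly one coordinate (Hamming distance `1`). -/
def cubeGraph (n : ℕ) : SimpleGraph (Fin n → Bool) where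
  Adj u v := hammingDist u v = 1
  symm := ⟨fun u v (h : hammingDist u v = 1) => (hammingDist_comm v u).trans h⟩
  loopless := ⟨fun u (h : hammingDist u u = 1) => by simp [hammingDist_self] at h⟩

/-- The vertex `0 = (0,…,0)` of the hypercube. -/
def vZero (n : ℕ) : Fin n → Bool := fun _ => false

/-- The vertex `1 = (1,…,1)` of the hypercube. -/
def vOne (n : ℕ) : Fin n → Bool := fun _ => true

open Classical in
/-- The energy `X_π` of a walk `π`, given weights `ξ` on the edges of the hypercube:
the sum of the weights of the edges traversed by `π`. -/
noncomputable def walkEnergy (n : ℕ) (ξ : (cubeGraph n).edgeSet → ℝ)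
    {u v : Fin n → Bool} (p : (cubeGraph n).Walk u v) : ℝ :=
  (p.edges.map (fun e => if h : e ∈ (cubeGraph n).edgeSet then ξ ⟨e, h⟩ else 0)).sum

/-- `m_n`: the minimum of the energy `X_π` over all self-avoiding paths `π` from `0` to `1`
in the hypercube, given weights `ξ` on the edges. -/
noncomputable def minEnergy (n : ℕ) (ξ : (cubeGraph n).edgeSet → ℝ) : ℝ :=
  ⨅ p : {p : (cubeGraph n).Walk (vZero n) (vOne n) // p.IsPath}, walkEnergy n ξ p.1


open Finset Nat
open scoped ENNReal


lemma gslt_length_eq_sum_count {n : ℕ} (s : List (Fin n)) :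
    s.length = ∑ i : Fin n, s.count i := by
  classical
  rw [← List.sum_toFinset_count_eq_length]
  exact Finset.sum_subset (Finset.subset_univ _) (fun i _ hi => by
    simpa [List.count_eq_zero] using fun h => hi (List.mem_toFinset.mpr h))

lemma gslt_card_mul_le {n : ℕ} :
    ∀ (l : ℕ) (c : Fin n → ℕ), (∑ i, c i) = l →
      ∀ S : Finset (List (Fin n)), (∀ s ∈ S, ∀ i, s.count i = c i) →
      S.card * ∏ i, (c i)! ≤ l ! := by
  classical
  intro l
  induction l with
  | zero =>
    intro c hc S hS
    have hc0 : ∀ i, c i = 0 := by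
      intro i
      have := Finset.sum_eq_zero_iff.mp hc i (Finset.mem_univ i)
      exact this
    have hsub : S ⊆ {[]} := by
      intro s hs
      simp only [Finset.mem_singleton]
      have hlen : s.length = 0 := by
        rw [gslt_length_eq_sum_count]
        simp [hS s hs, hc0]
      exact List.length_eq_zero_iff.mp hlen
    have hcard : S.card ≤ 1 := le_trans (Finset.card_le_card hsub) (by simp)
    have hprod : ∏ i, (c i)! = 1 := by simp [hc0]
    simpa [hprod, Nat.factorial] using hcard
  | succ l ih =>
    intro c hc S hS
    have hne : ∀ s ∈ S, s ≠ [] := by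
      intro s hs h
      have : s.length = l + 1 := by rw [gslt_length_eq_sum_count]; simp [hS s hs, hc]
      simp [h] at this
    have hcard : S.card = ∑ o : Option (Fin n), (S.filter (fun s => s.head? = o)).card :=
      Finset.card_eq_sum_card_fiberwise (fun s _ => Finset.mem_univ _)
    have hnone : (S.filter (fun s => s.head? = (none : Option (Fin n)))).card = 0 := by
      rw [Finset.card_eq_zero]
      refine Finset.filter_eq_empty_iff.mpr ?_
      intro s hs h
      exact hne s hs (List.head?_eq_none_iff.mp h)
    have hterm : ∀ i : Fin n,
        (S.filter (fun s => s.head? = some i)).card * ∏ j, (c j)! ≤ c i * l ! := by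
      intro i
      set F := S.filter (fun s => s.head? = some i) with hF
      rcases Finset.eq_empty_or_nonempty F with hFe | ⟨s₀, hs₀⟩
      · simp [hFe]
      · have hs₀S : s₀ ∈ S := (Finset.mem_filter.mp hs₀).1
        have hs₀h : s₀.head? = some i := (Finset.mem_filter.mp hs₀).2
        have hipos : 1 ≤ c i := by
          rw [← hS s₀ hs₀S i]
          exact List.count_pos_iff.mpr (List.mem_of_mem_head? (by rw [hs₀h]; simp))
        set c' := Function.update c i (c i - 1) with hc'
        have hshape : ∀ s ∈ F, s = i :: s.tail := by
          intro s hs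
          have h2 := (Finset.mem_filter.mp hs).2
          cases s with
          | nil => simp at h2
          | cons a t => simp_all
        have hsum' : (∑ j, c' j) = l := by
          rw [hc', Finset.sum_update_of_mem (Finset.mem_univ i)]
          have : ∑ j, c j = c i + ∑ j ∈ Finset.univ \ {i}, c j := by
            rw [← Finset.erase_eq]
            exact (Finset.add_sum_erase _ _ (Finset.mem_univ i)).symm
          omega
        set T := F.image List.tail with hT
        have hinj : Set.InjOn List.tail (F : Set (List (Fin n))) := by
          intro s hs t ht h
          rw [hshape s hs, hshape t ht, h]
        have hcardT : T.card = F.card := Finset.card_image_of_injOn hinj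
        have hcount : ∀ t ∈ T, ∀ j, t.count j = c' j := by
          intro t ht j
          obtain ⟨s, hs, rfl⟩ := Finset.mem_image.mp ht
          have hsS : s ∈ S := (Finset.mem_filter.mp hs).1
          have hcnt := hS s hsS
          have hsc : s = i :: s.tail := hshape s hs
          have hcc : s.count j = s.tail.count j + if j = i then 1 else 0 := by
            conv_lhs => rw [hsc]
            rw [List.count_cons]
            congr 1
            simp only [beq_iff_eq]
            by_cases h : j = i
            · simp [h]
            · simp [h, Ne.symm h]
          rw [hc']
          by_cases hji : j = i
          · subst hji
            rw [Function.update_self]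
            have h2 := hcnt j
            rw [hcc, if_pos rfl] at h2
            omega
          · rw [Function.update_of_ne hji]
            have h2 := hcnt j
            rw [hcc, if_neg hji] at h2
            omega
        have hIH := ih c' hsum' T hcount
        have hfact : ∏ j, (c j)! = c i * ∏ j, (c' j)! := by
          have h1 : ∀ j, (c' j)! = Function.update (fun j => (c j)!) i ((c i - 1)!) j := by
            intro j; rw [hc']
            exact (Function.apply_update (fun _ n => n !) c i (c i - 1) j)
          simp only [h1]
          rw [Finset.prod_update_of_mem (Finset.mem_univ i), ← Finset.erase_eq,
            ← Finset.mul_prod_erase Finset.univ (fun j => (c j)!) (Finset.mem_univ i),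
            ← mul_assoc]
          congr 1
          exact (Nat.mul_factorial_pred (by omega : c i ≠ 0)).symm
        calc F.card * ∏ j, (c j)! = c i * (T.card * ∏ j, (c' j)!) := by
              rw [hfact, hcardT]; ring
          _ ≤ c i * l ! := Nat.mul_le_mul_left _ hIH
    calc S.card * ∏ j, (c j)! = ∑ i : Fin n, (S.filter (fun s => s.head? = some i)).card * ∏ j, (c j)! := by
          rw [hcard, Fintype.sum_option, hnone, zero_add, Finset.sum_mul]
      _ ≤ ∑ i : Fin n, c i * l ! := Finset.sum_le_sum (fun i _ => hterm i)
      _ = (l + 1) * l ! := by rw [← Finset.sum_mul, hc]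
      _ = (l + 1)! := (Nat.factorial_succ l).symm

set_option maxHeartbeats 1000000 in

lemma gslt_hasSum_sinh (x : ℝ) :
    HasSum (fun k : ℕ => if Odd k then x ^ k / k ! else 0) (Real.sinh x) := by
  have h := Real.hasSum_sinh x
  have hinj : Function.Injective (fun m : ℕ => 2 * m + 1) := by intro a b h; dsimp only at h; omega
  have hzero : ∀ k : ℕ, k ∉ Set.range (fun m : ℕ => 2 * m + 1) →
      (if Odd k then x ^ k / k ! else 0) = 0 := by
    intro k hk
    rw [if_neg]
    intro ⟨m, hm⟩
    refine hk ⟨m, ?_⟩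
    dsimp only
    omega
  rw [← Function.Injective.hasSum_iff hinj hzero]
  convert h using 1
  funext m
  simp only [Function.comp]
  rw [if_pos ⟨m, by ring⟩]

set_option maxHeartbeats 1000000 in
lemma gslt_hasSum_pi {f : ℕ → ℝ} (hf : ∀ k, 0 ≤ f k) {a : ℝ} (h : HasSum f a) :
    ∀ n : ℕ, HasSum (fun m : Fin n → ℕ => ∏ i, f (m i)) (a ^ n) := by
  intro n
  induction n with
  | zero =>
    have he : (fun m : Fin 0 → ℕ => ∏ i, f (m i)) = fun _ => 1 := by
      funext m; simp
    rw [he, pow_zero]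
    have := hasSum_single (f := fun _ : Fin 0 → ℕ => (1:ℝ)) default
      (fun b hb => absurd (Subsingleton.elim b default) hb)
    simpa using this
  | succ n ih =>
    have hs : Summable (fun p : ℕ × (Fin n → ℕ) => f p.1 * ∏ i, f (p.2 i)) := by
      refine Summable.mul_of_nonneg (f := f) (g := fun m : Fin n → ℕ => ∏ i, f (m i))
        h.summable ih.summable ?_ ?_
      · exact fun k => hf k
      · exact fun m => Finset.prod_nonneg (fun i _ => hf _)
    have hmul : HasSum (fun p : ℕ × (Fin n → ℕ) => f p.1 * ∏ i, f (p.2 i)) (a * a ^ n) :=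
      HasSum.mul (f := f) (g := fun m : Fin n → ℕ => ∏ i, f (m i)) h ih hs
    have hcomp : (fun m : Fin (n+1) → ℕ => ∏ i, f (m i)) ∘ (Fin.consEquiv (fun _ => ℕ))
        = fun p : ℕ × (Fin n → ℕ) => f p.1 * ∏ i, f (p.2 i) := by
      funext p
      simp [Fin.prod_univ_succ, Fin.consEquiv, Fin.cons]
    have hfin : HasSum ((fun m : Fin (n+1) → ℕ => ∏ i, f (m i)) ∘ (Fin.consEquiv (fun _ => ℕ)))
        (a ^ (n+1)) := by
      rw [hcomp, _root_.pow_succ']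
      exact hmul
    exact (Equiv.hasSum_iff (Fin.consEquiv (fun _ => ℕ))).mp hfin

lemma gslt_sum_lists_le {n : ℕ} {x : ℝ} (hx : 0 < x) (P : Finset (List (Fin n)))
    (hodd : ∀ s ∈ P, ∀ i, Odd (s.count i)) :
    ∑ s ∈ P, x ^ s.length / (s.length)! ≤ Real.sinh x ^ n := by
  classical
  set f : ℕ → ℝ := fun k => if Odd k then x ^ k / k ! else 0 with hfdef
  have hf0 : ∀ k, 0 ≤ f k := by
    intro k
    rw [hfdef]
    by_cases h : Odd k
    · simp only [if_pos h]
      positivity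
    · simp [if_neg h]
  have hsum := gslt_hasSum_pi hf0 (gslt_hasSum_sinh x) n
  have hmap : ∀ s ∈ P, (fun i => s.count i) ∈ P.image (fun s i => s.count i) :=
    fun s hs => Finset.mem_image_of_mem _ hs
  have hterm : ∀ c ∈ P.image (fun s i => s.count i),
      ∑ s ∈ P.filter (fun s => (fun i => s.count i) = c), x ^ s.length / (s.length)!
        ≤ ∏ i, f (c i) := by
    intro c hc
    obtain ⟨s₀, hs₀, hc₀⟩ := Finset.mem_image.mp hc
    set l := ∑ i, c i with hl
    set F := P.filter (fun s => (fun i => s.count i) = c) with hFdef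
    have hcnt : ∀ s ∈ F, ∀ i, s.count i = c i := by
      intro s hs i
      exact congrFun (Finset.mem_filter.mp hs).2 i
    have hlen : ∀ s ∈ F, s.length = l := by
      intro s hs
      rw [gslt_length_eq_sum_count]
      exact Finset.sum_congr rfl (fun i _ => hcnt s hs i)
    have hconst : ∑ s ∈ F, x ^ s.length / (s.length)! = F.card * (x ^ l / l !) := by
      rw [Finset.sum_congr rfl (fun s hs => by rw [hlen s hs]), Finset.sum_const, nsmul_eq_mul]
    have hnat := gslt_card_mul_le l c hl.symm F hcnt
    have hprodpos : (0:ℝ) < ∏ i, ((c i)! : ℝ) :=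
      Finset.prod_pos (fun i _ => by exact_mod_cast Nat.factorial_pos _)
    have hlpos : (0:ℝ) < (l ! : ℝ) := by exact_mod_cast Nat.factorial_pos _
    have hkey : (F.card : ℝ) * ∏ i, ((c i)! : ℝ) ≤ (l ! : ℝ) := by exact_mod_cast hnat
    have hodd' : ∀ i, Odd (c i) := by
      intro i
      rw [← hc₀]
      exact hodd s₀ hs₀ i
    have hfc : ∀ i, f (c i) = x ^ (c i) / (c i)! := by
      intro i; rw [hfdef]; exact if_pos (hodd' i)
    have hx_l : (0:ℝ) ≤ x ^ l := pow_nonneg hx.le l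
    have h1 : (F.card : ℝ) * (x ^ l / l !) ≤ x ^ l / ∏ i, ((c i)! : ℝ) := by
      rw [← mul_div_assoc, div_le_div_iff₀ hlpos hprodpos]
      calc (F.card : ℝ) * x ^ l * ∏ i, ((c i)! : ℝ)
          = ((F.card : ℝ) * ∏ i, ((c i)! : ℝ)) * x ^ l := by ring
        _ ≤ (l ! : ℝ) * x ^ l := mul_le_mul_of_nonneg_right hkey hx_l
        _ = x ^ l * l ! := by ring
    rw [hconst]
    refine h1.trans_eq ?_
    have h2 : ∏ i, f (c i) = (∏ i, x ^ (c i)) / ∏ i, ((c i)! : ℝ) := by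
      rw [← Finset.prod_div_distrib]
      exact Finset.prod_congr rfl (fun i _ => hfc i)
    rw [h2, Finset.prod_pow_eq_pow_sum, ← hl]
  calc ∑ s ∈ P, x ^ s.length / (s.length)!
      = ∑ c ∈ P.image (fun s i => s.count i),
          ∑ s ∈ P.filter (fun s => (fun i => s.count i) = c), x ^ s.length / (s.length)! :=
        (Finset.sum_fiberwise_of_maps_to hmap _).symm
    _ ≤ ∑ c ∈ P.image (fun s i => s.count i), ∏ i, f (c i) := Finset.sum_le_sum hterm
    _ ≤ ∑' m : Fin n → ℕ, ∏ i, f (m i) :=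
        Summable.sum_le_tsum _ (fun c _ => Finset.prod_nonneg fun i _ => hf0 _) hsum.summable
    _ = Real.sinh x ^ n := hsum.tsum_eq

lemma gslt_filter_eq {n : ℕ} {u v : Fin n → Bool} (h : (cubeGraph n).Adj u v) :
    ∃ i, Finset.univ.filter (fun i => u i ≠ v i) = {i} := by
  refine Finset.card_eq_one.mp ?_
  have h' : hammingDist u v = 1 := h
  simpa [hammingDist, Finset.filter] using h'

noncomputable def gslt_dir {n : ℕ} {u v : Fin n → Bool} (h : (cubeGraph n).Adj u v) : Fin n :=
  (gslt_filter_eq h).choose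

lemma gslt_dir_spec {n : ℕ} {u v : Fin n → Bool} (h : (cubeGraph n).Adj u v) :
    Finset.univ.filter (fun i => u i ≠ v i) = {gslt_dir h} :=
  (gslt_filter_eq h).choose_spec

lemma gslt_dir_ne {n : ℕ} {u v : Fin n → Bool} (h : (cubeGraph n).Adj u v) :
    u (gslt_dir h) ≠ v (gslt_dir h) := by
  have : gslt_dir h ∈ Finset.univ.filter (fun i => u i ≠ v i) := by
    rw [gslt_dir_spec h]; exact Finset.mem_singleton_self _
  exact (Finset.mem_filter.mp this).2

lemma gslt_dir_eq_of_ne {n : ℕ} {u v : Fin n → Bool} (h : (cubeGraph n).Adj u v)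
    {j : Fin n} (hj : j ≠ gslt_dir h) : u j = v j := by
  by_contra hne
  have : j ∈ Finset.univ.filter (fun i => u i ≠ v i) := Finset.mem_filter.mpr ⟨Finset.mem_univ _, hne⟩
  rw [gslt_dir_spec h] at this
  exact hj (Finset.mem_singleton.mp this)

lemma gslt_dir_det {n : ℕ} {u v w : Fin n → Bool} (h1 : (cubeGraph n).Adj u v)
    (h2 : (cubeGraph n).Adj u w) (hd : gslt_dir h1 = gslt_dir h2) : v = w := by
  funext j
  by_cases hj : j = gslt_dir h1
  · subst hj
    have e1 := gslt_dir_ne h1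
    have e2 := gslt_dir_ne h2
    rw [← hd] at e2
    cases hu : u (gslt_dir h1) <;> cases hv : v (gslt_dir h1) <;> cases hw : w (gslt_dir h1) <;>
      simp_all
  · rw [← gslt_dir_eq_of_ne h1 hj, ← gslt_dir_eq_of_ne h2 (hd ▸ hj)]

noncomputable def gslt_dirs {n : ℕ} : ∀ {u v : Fin n → Bool}, (cubeGraph n).Walk u v → List (Fin n)
  | _, _, SimpleGraph.Walk.nil => []
  | _, _, SimpleGraph.Walk.cons h p => gslt_dir h :: gslt_dirs p

lemma gslt_dirs_length {n : ℕ} {u v : Fin n → Bool} (p : (cubeGraph n).Walk u v) :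
    (gslt_dirs p).length = p.length := by
  induction p with
  | nil => rfl
  | cons h p ih => simp [gslt_dirs, ih]

lemma gslt_dirs_count {n : ℕ} {u v : Fin n → Bool} (p : (cubeGraph n).Walk u v) (i : Fin n) :
    (gslt_dirs p).count i % 2 = if u i = v i then 0 else 1 := by
  induction p with
  | nil => simp [gslt_dirs]
  | @cons u w v h q ih =>
    have hcc : (gslt_dirs (SimpleGraph.Walk.cons h q)).count i
        = (gslt_dirs q).count i + if gslt_dir h = i then 1 else 0 := by
      simp only [gslt_dirs, List.count_cons, beq_iff_eq]
    rw [hcc]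
    by_cases hid : i = gslt_dir h
    · have hne : u i ≠ w i := by rw [hid]; exact gslt_dir_ne h
      rw [if_pos hid.symm]
      by_cases h1 : w i = v i
      · have h2 : u i ≠ v i := fun hh => hne (hh.trans h1.symm)
        rw [if_neg h2]
        rw [if_pos h1] at ih
        omega
      · have h2 : u i = v i := by
          cases hu : u i <;> cases hw : w i <;> cases hv : v i <;> simp_all
        rw [if_pos h2]
        rw [if_neg h1] at ih
        omega
    · have heq : u i = w i := gslt_dir_eq_of_ne h hid
      rw [if_neg (fun hh => hid hh.symm), heq]
      simpa using ih

lemma gslt_dirs_inj {n : ℕ} {u v : Fin n → Bool} (p q : (cubeGraph n).Walk u v)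
    (h : gslt_dirs p = gslt_dirs q) : p = q := by
  induction p with
  | nil =>
    cases q with
    | nil => rfl
    | cons h' q' => simp [gslt_dirs] at h
  | @cons u w v h1 p' ih =>
    cases q with
    | nil => simp [gslt_dirs] at h
    | @cons _ w2 _ h2 q2 =>
      simp only [gslt_dirs, List.cons.injEq] at h
      obtain ⟨hd, ht⟩ := h
      have hw : w = w2 := gslt_dir_det h1 h2 hd
      subst hw
      rw [ih q2 ht]

lemma gslt_reachable {n : ℕ} (v : Fin n → Bool) : ∀ u, (cubeGraph n).Reachable u v := by
  suffices H : ∀ (d : ℕ) (u : Fin n → Bool), hammingDist u v = d → (cubeGraph n).Reachable u v by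
    intro u; exact H _ u rfl
  intro d
  induction d with
  | zero =>
    intro u hu
    exact (hammingDist_eq_zero.mp hu) ▸ SimpleGraph.Reachable.refl u
  | succ d ihd =>
    intro u hu
    have hne : (Finset.univ.filter (fun i => u i ≠ v i)).Nonempty := by
      rw [← Finset.card_pos]
      have : hammingDist u v = (Finset.univ.filter (fun i => u i ≠ v i)).card := by
        simp [hammingDist, Finset.filter]
      omega
    obtain ⟨i, hi⟩ := hne
    have hiv : u i ≠ v i := (Finset.mem_filter.mp hi).2
    set u' := Function.update u i (v i) with hu'
    have hadj : (cubeGraph n).Adj u u' := by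
      show hammingDist u u' = 1
      have : Finset.univ.filter (fun j => u j ≠ u' j) = {i} := by
        ext j
        simp only [Finset.mem_filter, Finset.mem_univ, true_and, Finset.mem_singleton, hu']
        constructor
        · intro hj
          by_contra hji
          exact hj (by rw [Function.update_of_ne hji])
        · intro hj
          subst hj
          rw [Function.update_self]
          exact hiv
      calc hammingDist u u' = (Finset.univ.filter (fun j => u j ≠ u' j)).card := by
            simp [hammingDist, Finset.filter]
        _ = 1 := by rw [this]; exact Finset.card_singleton i
    have hdist : hammingDist u' v = d := by
      have hset : Finset.univ.filter (fun j => u' j ≠ v j)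
          = (Finset.univ.filter (fun j => u j ≠ v j)).erase i := by
        ext j
        simp only [Finset.mem_filter, Finset.mem_univ, true_and, Finset.mem_erase, hu']
        constructor
        · intro hj
          by_cases hji : j = i
          · subst hji; rw [Function.update_self] at hj; exact absurd rfl hj
          · rw [Function.update_of_ne hji] at hj; exact ⟨hji, hj⟩
        · intro ⟨hji, hj⟩
          rw [Function.update_of_ne hji]; exact hj
      have h1 : hammingDist u' v = (Finset.univ.filter (fun j => u' j ≠ v j)).card := by
        simp [hammingDist, Finset.filter]
      have h2 : hammingDist u v = (Finset.univ.filter (fun j => u j ≠ v j)).card := by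
        simp [hammingDist, Finset.filter]
      rw [h1, hset, Finset.card_erase_of_mem hi]
      omega
    exact (hadj.reachable).trans (ihd u' hdist)


lemma gslt_tail_bound {Ω : Type*} [MeasurableSpace Ω] (μ : Measure Ω) [IsProbabilityMeasure μ]
    {ι : Type*} (ξ : ι → Ω → ℝ) (hmeas : ∀ e, Measurable (ξ e))
    (hindep : iIndepFun ξ μ)
    (hexp : ∀ e, μ.map (ξ e) = expMeasure 1) :
    ∀ (T : Finset ι) (y : ℝ), μ {ω | ∑ e ∈ T, ξ e ω ≤ y} ≤
      if 0 ≤ y then ENNReal.ofReal (y ^ T.card / (T.card)!) else 0 := by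
  classical
  have hexp_wd : expMeasure (1:ℝ) = volume.withDensity (exponentialPDF 1) := rfl
  have hae : ∀ e : ι, ∀ᵐ ω ∂μ, 0 ≤ ξ e ω := by
    intro e
    rw [ae_iff]
    have hset : {ω | ¬ 0 ≤ ξ e ω} = (ξ e) ⁻¹' (Set.Iio 0) := by
      ext ω; simp [not_le]
    rw [hset, ← Measure.map_apply (hmeas e) measurableSet_Iio, hexp e, hexp_wd,
      withDensity_apply _ measurableSet_Iio]
    exact lintegral_exponentialPDF_of_nonpos le_rfl
  intro T
  induction T using Finset.induction_on with
  | empty =>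
    intro y
    by_cases hy : 0 ≤ y
    · rw [if_pos hy]
      simp only [Finset.card_empty, pow_zero, Nat.factorial_zero, Nat.cast_one]
      calc μ _ ≤ 1 := prob_le_one
        _ = ENNReal.ofReal ((1:ℝ)/1) := by norm_num
    · rw [if_neg hy]
      have : {ω : Ω | ∑ e ∈ (∅ : Finset ι), ξ e ω ≤ y} = ∅ := by
        ext ω; simp only [Finset.sum_empty, Set.mem_setOf_eq, Set.mem_empty_iff_false, iff_false]
        linarith
      rw [this, measure_empty]
  | @insert e T' heT ih =>
    intro y
    set S : Ω → ℝ := fun ω => ∑ a ∈ T', ξ a ω with hS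
    have hSm : Measurable S := by
      apply Finset.measurable_sum
      exact fun a _ => hmeas a
    have hST' : ∀ᵐ ω ∂μ, 0 ≤ S ω := by
      have hball : ∀ᵐ ω ∂μ, ∀ a ∈ T', 0 ≤ ξ a ω :=
        (ae_ball_iff T'.countable_toSet).2 (fun a _ => hae a)
      filter_upwards [hball] with ω hω
      exact Finset.sum_nonneg hω
    by_cases hy : 0 ≤ y
    swap
    · rw [if_neg hy]
      have h0 : ∀ᵐ ω ∂μ, ¬ (∑ a ∈ insert e T', ξ a ω ≤ y) := by
        filter_upwards [hae e, hST'] with ω h1 h2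
        rw [Finset.sum_insert heT]
        push_neg
        linarith
      exact le_of_eq (by simpa using ae_iff.mp h0)
    rw [if_pos hy]
    set k := T'.card with hk
    have hindepF : IndepFun (ξ e) S μ := by
      have h := hindep.indepFun_finset_sum_of_notMem hmeas heT
      have hfs : (∑ j ∈ T', ξ j) = S := by funext ω; simp [hS]
      rw [hfs] at h
      exact h.symm
    have hmap : μ.map (fun ω => (ξ e ω, S ω)) = (μ.map (ξ e)).prod (μ.map S) :=
      (indepFun_iff_map_prod_eq_prod_map_map (hmeas e).aemeasurable hSm.aemeasurable).mp hindepF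
    have hsetm : MeasurableSet {p : ℝ × ℝ | p.1 + p.2 ≤ y} :=
      measurableSet_le (measurable_fst.add measurable_snd) measurable_const
    have h1 : μ {ω | ∑ a ∈ insert e T', ξ a ω ≤ y}
        = ((μ.map (ξ e)).prod (μ.map S)) {p : ℝ × ℝ | p.1 + p.2 ≤ y} := by
      rw [← hmap, Measure.map_apply ((hmeas e).prodMk hSm) hsetm]
      congr 1
      ext ω
      simp [Finset.sum_insert heT, hS]
    set g : ℝ → ℝ≥0∞ :=
      fun a => (Set.Iic y).indicator (fun a => ENNReal.ofReal ((y - a) ^ k / k !)) a with hg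
    have hgm : Measurable g := by
      apply Measurable.indicator _ measurableSet_Iic
      exact (ENNReal.measurable_ofReal.comp (by fun_prop))
    have h2 : ∀ a : ℝ, (μ.map S) (Prod.mk a ⁻¹' {p : ℝ × ℝ | p.1 + p.2 ≤ y}) ≤ g a := by
      intro a
      have hpre : Prod.mk a ⁻¹' {p : ℝ × ℝ | p.1 + p.2 ≤ y} = Set.Iic (y - a) := by
        ext b
        simp only [Set.mem_preimage, Set.mem_setOf_eq, Set.mem_Iic]
        constructor <;> intro <;> linarith
      rw [hpre, Measure.map_apply hSm measurableSet_Iic]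
      have hih := ih (y - a)
      have hsetS : (S ⁻¹' Set.Iic (y - a)) = {ω | ∑ a' ∈ T', ξ a' ω ≤ y - a} := by
        ext ω; simp [hS, Set.mem_Iic]
      rw [hsetS]
      refine hih.trans ?_
      rw [hg]
      dsimp only
      by_cases ha : a ≤ y
      · rw [if_pos (by linarith), Set.indicator_of_mem (Set.mem_Iic.mpr ha)]
      · rw [if_neg (by intro h; exact ha (by linarith))]
        exact _root_.zero_le
    have h3 : ∫⁻ a, exponentialPDF 1 a * g a ≤ ∫⁻ a, (Set.Ici (0:ℝ)).indicator g a := by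
      apply lintegral_mono
      intro a
      dsimp only
      by_cases ha : 0 ≤ a
      · rw [Set.indicator_of_mem (Set.mem_Ici.mpr ha)]
        calc exponentialPDF 1 a * g a ≤ 1 * g a := by
              apply _root_.mul_le_mul_left
              rw [exponentialPDF_of_nonneg ha]
              refine ENNReal.ofReal_le_one.mpr ?_
              rw [one_mul]
              exact Real.exp_le_one_iff.mpr (by linarith)
          _ = g a := one_mul _
      · rw [exponentialPDF_of_neg (by linarith), zero_mul]
        exact _root_.zero_le
    have h4 : ∫⁻ a, (Set.Ici (0:ℝ)).indicator g a
        = ∫⁻ a in Set.Icc 0 y, ENNReal.ofReal ((y - a) ^ k / k !) := by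
      rw [lintegral_indicator measurableSet_Ici, hg]
      rw [lintegral_indicator measurableSet_Iic]
      rw [Measure.restrict_restrict measurableSet_Iic]
      rw [Set.Iic_inter_Ici]
    have h5 : ∫⁻ a in Set.Icc 0 y, ENNReal.ofReal ((y - a) ^ k / k !)
        = ENNReal.ofReal (y ^ (k+1) / (k+1)!) := by
      have hcont : Continuous (fun a : ℝ => (y - a) ^ k / k !) := by
        fun_prop
      have hint : Integrable (fun a : ℝ => (y - a) ^ k / k !)
          (volume.restrict (Set.Icc 0 y)) :=
        (hcont.continuousOn.integrableOn_compact isCompact_Icc)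
      have hnn : 0 ≤ᵐ[volume.restrict (Set.Icc 0 y)] fun a : ℝ => (y - a) ^ k / k ! := by
        rw [Filter.EventuallyLE, ae_restrict_iff' measurableSet_Icc]
        refine Filter.Eventually.of_forall (fun a ha => ?_)
        have : 0 ≤ y - a := by linarith [ha.2]
        positivity
      rw [← ofReal_integral_eq_lintegral_ofReal hint hnn]
      congr 1
      rw [MeasureTheory.integral_Icc_eq_integral_Ioc,
        ← intervalIntegral.integral_of_le hy]
      rw [intervalIntegral.integral_div]
      have hsub : ∫ a in (0:ℝ)..y, (y - a) ^ k = ∫ a in (0:ℝ)..y, a ^ k := by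
        have := intervalIntegral.integral_comp_sub_left (a := (0:ℝ)) (b := y)
          (fun a : ℝ => a ^ k) y
        simpa using this
      rw [hsub, integral_pow]
      have hfact : ((k+1)! : ℝ) = (k+1) * k ! := by
        rw [Nat.factorial_succ]
        push_cast
        ring
      rw [hfact]
      field_simp
      simp
    have hcard : (insert e T').card = k + 1 := Finset.card_insert_of_notMem heT
    calc μ {ω | ∑ a ∈ insert e T', ξ a ω ≤ y}
        = ((μ.map (ξ e)).prod (μ.map S)) {p : ℝ × ℝ | p.1 + p.2 ≤ y} := h1
      _ = ∫⁻ a, (μ.map S) (Prod.mk a ⁻¹' {p : ℝ × ℝ | p.1 + p.2 ≤ y}) ∂(μ.map (ξ e)) :=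
          Measure.prod_apply hsetm
      _ ≤ ∫⁻ a, g a ∂(μ.map (ξ e)) := lintegral_mono h2
      _ = ∫⁻ a, g a ∂(volume.withDensity (exponentialPDF 1)) := by rw [hexp e, hexp_wd]
      _ = ∫⁻ a, exponentialPDF 1 a * g a := by
          have hpdfm : Measurable (exponentialPDF 1) :=
            ENNReal.measurable_ofReal.comp (measurable_exponentialPDFReal 1)
          rw [lintegral_withDensity_eq_lintegral_mul _ hpdfm hgm]
          rfl
      _ ≤ ∫⁻ a, (Set.Ici (0:ℝ)).indicator g a := h3
      _ = ENNReal.ofReal (y ^ (k+1) / (k+1)!) := by rw [h4, h5]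
      _ = ENNReal.ofReal (y ^ (insert e T').card / ((insert e T').card)!) := by rw [hcard]

open Classical in
noncomputable def gslt_edgeFinset {n : ℕ} {u v : Fin n → Bool} (p : (cubeGraph n).Walk u v) :
    Finset (cubeGraph n).edgeSet :=
  (p.edges.attach.map
    (fun e => (⟨e.1, p.edges_subset_edgeSet e.2⟩ : (cubeGraph n).edgeSet))).toFinset

open Classical in
lemma gslt_edgeList_nodup {n : ℕ} {u v : Fin n → Bool} {p : (cubeGraph n).Walk u v}
    (hp : p.IsPath) :
    (p.edges.attach.map
      (fun e => (⟨e.1, p.edges_subset_edgeSet e.2⟩ : (cubeGraph n).edgeSet))).Nodup := by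
  refine List.Nodup.map_on ?_ (List.nodup_attach.mpr hp.isTrail.edges_nodup)
  intro e he e' he' h
  have h' : (e : Sym2 (Fin n → Bool)) = (e' : Sym2 (Fin n → Bool)) := congrArg (Subtype.val : (cubeGraph n).edgeSet → Sym2 (Fin n → Bool)) h
  exact Subtype.ext h'

open Classical in
lemma gslt_edgeFinset_card {n : ℕ} {u v : Fin n → Bool} {p : (cubeGraph n).Walk u v}
    (hp : p.IsPath) : (gslt_edgeFinset p).card = p.length := by
  rw [gslt_edgeFinset, List.toFinset_card_of_nodup (gslt_edgeList_nodup hp)]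
  rw [List.length_map, List.length_attach, SimpleGraph.Walk.length_edges]

open Classical in
lemma gslt_sum_pmap {n : ℕ} (w : (cubeGraph n).edgeSet → ℝ) :
    ∀ (l : List (Sym2 (Fin n → Bool))) (hl : ∀ e ∈ l, e ∈ (cubeGraph n).edgeSet),
      (l.map (fun e => if h : e ∈ (cubeGraph n).edgeSet then w ⟨e, h⟩ else 0)).sum
        = (l.pmap (fun e h => w ⟨e, h⟩) hl).sum := by
  intro l
  induction l with
  | nil => intro hl; rfl
  | cons e t ih =>
    intro hl
    rw [List.map_cons, List.pmap, List.sum_cons, List.sum_cons,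
      dif_pos (hl e (by simp)), ih (fun a ha => hl a (by simp [ha]))]

open Classical in
lemma gslt_energy_eq {n : ℕ} {u v : Fin n → Bool} {p : (cubeGraph n).Walk u v}
    (hp : p.IsPath) (w : (cubeGraph n).edgeSet → ℝ) :
    walkEnergy n w p = ∑ e ∈ gslt_edgeFinset p, w e := by
  rw [gslt_edgeFinset, List.sum_toFinset _ (gslt_edgeList_nodup hp)]
  rw [walkEnergy, gslt_sum_pmap w p.edges (fun e he => p.edges_subset_edgeSet he),
    List.pmap_eq_map_attach, List.map_map]
  rfl

instance gslt_decAdj (n : ℕ) : DecidableRel (cubeGraph n).Adj :=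
  fun u v => inferInstanceAs (Decidable (hammingDist u v = 1))

/-- If the edges of `Q_n` (`n ≥ 1`) carry i.i.d. rate-1 exponential weights, then the minimal
energy `m_n` over self-avoiding paths from `0` to `1` satisfies
`P(m_n ≤ x) ≤ (1 + x) · sinh(x)^n` for every `x > 0`. -/
theorem ground_state_lower_tail
    {Ω : Type*} [MeasurableSpace Ω] (μ : Measure Ω) [IsProbabilityMeasure μ]
    (n : ℕ) (hn : 1 ≤ n)
    (ξ : (cubeGraph n).edgeSet → Ω → ℝ) (hmeas : ∀ e, Measurable (ξ e))
    (hindep : iIndepFun ξ μ)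
    (hexp : ∀ e, μ.map (ξ e) = expMeasure 1)
    (x : ℝ) (hx : 0 < x) :
    (μ {ω | minEnergy n (fun e => ξ e ω) ≤ x}).toReal ≤ (1 + x) * Real.sinh x ^ n := by
  classical
  haveI hfin : Fintype {p : (cubeGraph n).Walk (vZero n) (vOne n) // p.IsPath} :=
    inferInstanceAs (Fintype ((cubeGraph n).Path (vZero n) (vOne n)))
  haveI hne : Nonempty {p : (cubeGraph n).Walk (vZero n) (vOne n) // p.IsPath} := by
    obtain ⟨w⟩ := gslt_reachable (vOne n) (vZero n)
    exact ⟨w.toPath⟩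
  -- union bound
  have hsub : {ω | minEnergy n (fun e => ξ e ω) ≤ x} ⊆
      ⋃ p : {p : (cubeGraph n).Walk (vZero n) (vOne n) // p.IsPath},
        {ω | walkEnergy n (fun e => ξ e ω) p.1 ≤ x} := by
    intro ω hω
    obtain ⟨p, hp⟩ := exists_eq_ciInf_of_finite
      (f := fun p : {p : (cubeGraph n).Walk (vZero n) (vOne n) // p.IsPath} =>
        walkEnergy n (fun e => ξ e ω) p.1)
    refine Set.mem_iUnion.mpr ⟨p, ?_⟩
    rw [Set.mem_setOf_eq, hp]
    exact hω
  have hbound : μ {ω | minEnergy n (fun e => ξ e ω) ≤ x} ≤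
      ∑ p : {p : (cubeGraph n).Walk (vZero n) (vOne n) // p.IsPath},
        μ {ω | walkEnergy n (fun e => ξ e ω) p.1 ≤ x} := by
    refine (measure_mono hsub).trans ?_
    rw [← tsum_fintype (L := .unconditional _)]
    exact measure_iUnion_le _
  -- per-path bound
  have hpath : ∀ p : {p : (cubeGraph n).Walk (vZero n) (vOne n) // p.IsPath},
      μ {ω | walkEnergy n (fun e => ξ e ω) p.1 ≤ x}
        ≤ ENNReal.ofReal (x ^ p.1.length / (p.1.length)!) := by
    intro p
    have h1 : {ω | walkEnergy n (fun e => ξ e ω) p.1 ≤ x}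
        = {ω | ∑ e ∈ gslt_edgeFinset p.1, ξ e ω ≤ x} := by
      ext ω
      rw [Set.mem_setOf_eq, Set.mem_setOf_eq, gslt_energy_eq p.2]
    rw [h1]
    have := gslt_tail_bound μ ξ hmeas hindep hexp (gslt_edgeFinset p.1) x
    rw [if_pos hx.le, gslt_edgeFinset_card p.2] at this
    exact this
  -- combinatorial bound
  have hsum : ∑ p : {p : (cubeGraph n).Walk (vZero n) (vOne n) // p.IsPath},
      x ^ p.1.length / (p.1.length)! ≤ Real.sinh x ^ n := by
    set P : Finset (List (Fin n)) :=
      Finset.univ.image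
        (fun p : {p : (cubeGraph n).Walk (vZero n) (vOne n) // p.IsPath} => gslt_dirs p.1)
      with hP
    have hinj : ∀ p ∈ (Finset.univ : Finset {p : (cubeGraph n).Walk (vZero n) (vOne n) // p.IsPath}),
        ∀ q ∈ Finset.univ, gslt_dirs p.1 = gslt_dirs q.1 → p = q :=
      fun p _ q _ h => Subtype.ext (gslt_dirs_inj p.1 q.1 h)
    have heq : ∑ s ∈ P, x ^ s.length / (s.length)!
        = ∑ p : {p : (cubeGraph n).Walk (vZero n) (vOne n) // p.IsPath},
            x ^ p.1.length / (p.1.length)! := by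
      rw [hP, Finset.sum_image hinj]
      refine Finset.sum_congr rfl (fun p _ => ?_)
      rw [gslt_dirs_length]
    rw [← heq]
    refine gslt_sum_lists_le hx P ?_
    intro s hs i
    obtain ⟨p, _, rfl⟩ := Finset.mem_image.mp hs
    have := gslt_dirs_count p.1 i
    rw [if_neg (by simp [vZero, vOne])] at this
    exact Nat.odd_iff.mpr this
  -- conclude
  have hfinal : μ {ω | minEnergy n (fun e => ξ e ω) ≤ x}
      ≤ ENNReal.ofReal ((1 + x) * Real.sinh x ^ n) := by
    refine hbound.trans ?_
    calc ∑ p : {p : (cubeGraph n).Walk (vZero n) (vOne n) // p.IsPath},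
          μ {ω | walkEnergy n (fun e => ξ e ω) p.1 ≤ x}
        ≤ ∑ p : {p : (cubeGraph n).Walk (vZero n) (vOne n) // p.IsPath},
          ENNReal.ofReal (x ^ p.1.length / (p.1.length)!) := Finset.sum_le_sum (fun p _ => hpath p)
      _ = ENNReal.ofReal (∑ p : {p : (cubeGraph n).Walk (vZero n) (vOne n) // p.IsPath},
            x ^ p.1.length / (p.1.length)!) :=
          (ENNReal.ofReal_sum_of_nonneg (fun p _ => by positivity)).symm
      _ ≤ ENNReal.ofReal ((1 + x) * Real.sinh x ^ n) := by
          refine ENNReal.ofReal_le_ofReal ?_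
          refine hsum.trans ?_
          have hs : 0 ≤ Real.sinh x ^ n := pow_nonneg (Real.sinh_pos_iff.mpr hx).le n
          nlinarith
  have hnn : 0 ≤ (1 + x) * Real.sinh x ^ n := by
    have hs : 0 ≤ Real.sinh x ^ n := pow_nonneg (Real.sinh_pos_iff.mpr hx).le n
    nlinarith
  exact ENNReal.toReal_le_of_le_ofReal hnn hfinal
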